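/- Let N be a positive integer, let A and B be the N×N matrices with A_{m,n} = 1 if m+n is even and 0 otherwise, and B_{m,n} = 1 if m+n is odd and 0 otherwise. Let e = (1,1,…,1)^⊤ ∈ ℝ^N and w ∈ ℝ^N with w_m = (−1)^{m+1}. Then for every u_0 ∈ ℝ^N and every real t, J_0(t) A u_0 + 2 (Σ_{l=1}^∞ J_{4l}(t)) A u_0 + 2 (Σ_{l=1}^∞ J_{4l−2}(t)) B u_0 = (1/2) ( (e·u_0) e + (w·u_0) cos(t) w ). -/

import Mathlib

open Real Matrix

/-- Bessel function of the first kind of nonnegative integer order n: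
J_n(t) = Σ_{m=0}^∞ ((−1)^m/(m!(n+m)!)) (t/2)^{n+2m}. -/
noncomputable def besselJ (n : ℕ) (t : ℝ) : ℝ :=
  ∑' m : ℕ, ((-1 : ℝ) ^ m / ((m.factorial : ℝ) * ((n + m).factorial : ℝ))) * (t / 2) ^ (n + 2 * m)

/-- A_{m,n} = 1 if m+n is even, 0 otherwise (1-based m, n; parity of
(m.1+1)+(n.1+1) equals parity of m.1+n.1). -/
def Amat (N : ℕ) : Matrix (Fin N) (Fin N) ℝ :=
  fun m n => if Even ((m.1 + 1) + (n.1 + 1)) then 1 else 0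

/-- B_{m,n} = 1 if m+n is odd, 0 otherwise (1-based m, n). -/
def Bmat (N : ℕ) : Matrix (Fin N) (Fin N) ℝ :=
  fun m n => if Odd ((m.1 + 1) + (n.1 + 1)) then 1 else 0

/-- e = (1,…,1)ᵀ. -/
def evec (N : ℕ) : Fin N → ℝ := fun _ => 1

/-- w_m = (−1)^{m+1} for 1-based m, i.e. (−1)^{m.1}. -/
def wvec (N : ℕ) : Fin N → ℝ := fun m => (-1 : ℝ) ^ m.1

namespace Stmt15Aux
open Finset


lemma sum_split (f : ℕ → ℝ) (n : ℕ) :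
    ∑ j ∈ range (2*n+1), f j
      = f n + (∑ k ∈ range n, f (n+1+k)) + ∑ k ∈ range n, f (n-1-k) := by
  have h2 : 2*n+1 = n + (n+1) := by ring
  rw [h2, Finset.sum_range_add]
  have h3 : ∑ k ∈ range (n+1), f (n + k)
      = (∑ k ∈ range n, f (n+1+k)) + f n := by
    rw [Finset.sum_range_succ', Nat.add_zero]
    congr 1
    exact Finset.sum_congr rfl fun k _ => by congr 1; omega
  have h4 : ∑ j ∈ range n, f j = ∑ k ∈ range n, f (n-1-k) :=
    (Finset.sum_range_reflect f n).symm
  rw [h3, h4]; ring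

lemma neg_one_pow_sub (n k : ℕ) (h : k + 1 ≤ n) :
    (-1:ℝ)^(n-1-k) = (-1)^n * (-1)^(k+1) := by
  have h2 : n + (k+1) = (n-1-k) + 2*(k+1) := by omega
  rw [← pow_add, h2, pow_add, pow_mul]
  norm_num

lemma binom_one (n : ℕ) :
    ((2*n).choose n : ℝ) + 2 * ∑ k ∈ range n, ((2*n).choose (n+1+k) : ℝ) = 4 ^ n := by
  have h := Nat.sum_range_choose (2*n)
  have hr : ∑ j ∈ range (2*n+1), ((2*n).choose j : ℝ) = 4 ^ n := by
    have := congrArg (Nat.cast : ℕ → ℝ) h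
    push_cast at this
    rw [this]
    rw [show (4:ℝ) = 2^2 by norm_num, ← pow_mul]
  rw [sum_split (fun j => ((2*n).choose j : ℝ)) n] at hr
  have hrefl : ∑ k ∈ range n, ((2*n).choose (n-1-k) : ℝ)
      = ∑ k ∈ range n, ((2*n).choose (n+1+k) : ℝ) := by
    refine Finset.sum_congr rfl fun k hk => ?_
    have hk' : k < n := Finset.mem_range.mp hk
    congr 1
    rw [← Nat.choose_symm (show n+1+k ≤ 2*n by omega)]
    congr 1
    omega
  rw [hrefl] at hr
  linarith

lemma binom_alt (n : ℕ) (hn : n ≠ 0) :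
    ((2*n).choose n : ℝ) + 2 * ∑ k ∈ range n, (-1:ℝ)^(k+1) * ((2*n).choose (n+1+k) : ℝ) = 0 := by
  have h := Int.alternating_sum_range_choose_of_ne (show 2*n ≠ 0 by omega)
  have hr : ∑ j ∈ range (2*n+1), (-1:ℝ)^j * ((2*n).choose j : ℝ) = 0 := by
    have := congrArg (Int.cast : ℤ → ℝ) h
    push_cast at this
    rw [this]
  rw [sum_split (fun j => (-1:ℝ)^j * ((2*n).choose j : ℝ)) n] at hr
  have hrefl : ∑ k ∈ range n, (-1:ℝ)^(n-1-k) * ((2*n).choose (n-1-k) : ℝ)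
      = ∑ k ∈ range n, (-1:ℝ)^n * ((-1:ℝ)^(k+1) * ((2*n).choose (n+1+k) : ℝ)) := by
    refine Finset.sum_congr rfl fun k hk => ?_
    have hk' : k < n := Finset.mem_range.mp hk
    rw [neg_one_pow_sub n k hk']
    have : (2*n).choose (n-1-k) = (2*n).choose (n+1+k) := by
      rw [← Nat.choose_symm (show n+1+k ≤ 2*n by omega)]
      congr 1
      omega
    rw [this]
    ring
  rw [hrefl] at hr
  have hshift : ∑ k ∈ range n, (-1:ℝ)^(n+1+k) * ((2*n).choose (n+1+k) : ℝ)
      = ∑ k ∈ range n, (-1:ℝ)^n * ((-1:ℝ)^(k+1) * ((2*n).choose (n+1+k) : ℝ)) := by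
    refine Finset.sum_congr rfl fun k hk => ?_
    rw [show n+1+k = n + (k+1) by ring, pow_add]
    ring
  rw [hshift] at hr
  rcases Nat.even_or_odd n with hp | hp
  · rw [hp.neg_one_pow] at hr; simp only [one_mul] at hr; linarith
  · rw [hp.neg_one_pow] at hr
    simp only [neg_one_mul, Finset.sum_neg_distrib] at hr
    linarith


lemma inv_fact_eq (n k : ℕ) (hk : k ≤ n) :
    (((n-k).factorial : ℝ) * ((n+k).factorial : ℝ))⁻¹
      = ((2*n).choose (n+k) : ℝ) / ((2*n).factorial : ℝ) := by
  have h := Nat.choose_mul_factorial_mul_factorial (show n+k ≤ 2*n by omega)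
  rw [show 2*n - (n+k) = n - k by omega] at h
  have hc := congrArg (Nat.cast : ℕ → ℝ) h
  push_cast at hc
  have f1 : ((n-k).factorial : ℝ) ≠ 0 := Nat.cast_ne_zero.mpr (Nat.factorial_ne_zero _)
  have f2 : ((n+k).factorial : ℝ) ≠ 0 := Nat.cast_ne_zero.mpr (Nat.factorial_ne_zero _)
  have f3 : ((2*n).factorial : ℝ) ≠ 0 := Nat.cast_ne_zero.mpr (Nat.factorial_ne_zero _)
  field_simp
  linear_combination -hc

lemma coef_one (n : ℕ) (hn : n ≠ 0) :
    ∑ k ∈ range (n+1), (if k = 0 then (1:ℝ) else 2) *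
      ((-1:ℝ)^(n-k) * (((n-k).factorial : ℝ) * ((n+k).factorial : ℝ))⁻¹) = 0 := by
  have hterm : ∀ k ∈ range n, (if k + 1 = 0 then (1:ℝ) else 2) *
      ((-1:ℝ)^(n-(k+1)) * (((n-(k+1)).factorial : ℝ) * ((n+(k+1)).factorial : ℝ))⁻¹)
      = ((-1:ℝ)^n / ((2*n).factorial : ℝ)) * (2 * ((-1:ℝ)^(k+1) * ((2*n).choose (n+1+k) : ℝ))) := by
    intro k hk
    have hk' : k < n := Finset.mem_range.mp hk
    rw [if_neg (Nat.succ_ne_zero _), inv_fact_eq n (k+1) (by omega),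
      show n-(k+1) = n-1-k by omega, neg_one_pow_sub n k hk',
      show n+(k+1) = n+1+k by ring]
    ring
  rw [Finset.sum_range_succ', Finset.sum_congr rfl hterm, ← Finset.mul_sum,
    ← Finset.mul_sum, if_pos rfl, inv_fact_eq n 0 (Nat.zero_le n)]
  have hb := binom_alt n hn
  simp only [Nat.sub_zero, Nat.add_zero]
  linear_combination ((-1:ℝ)^n / ((2*n).factorial : ℝ)) * hb

lemma coef_cos (n : ℕ) :
    ∑ k ∈ range (n+1), (if k = 0 then (1:ℝ) else 2*(-1:ℝ)^k) *
      ((-1:ℝ)^(n-k) * (((n-k).factorial : ℝ) * ((n+k).factorial : ℝ))⁻¹)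
      = (-1:ℝ)^n * 4^n / ((2*n).factorial : ℝ) := by
  have hterm : ∀ k ∈ range n, (if k + 1 = 0 then (1:ℝ) else 2*(-1:ℝ)^(k+1)) *
      ((-1:ℝ)^(n-(k+1)) * (((n-(k+1)).factorial : ℝ) * ((n+(k+1)).factorial : ℝ))⁻¹)
      = ((-1:ℝ)^n / ((2*n).factorial : ℝ)) * (2 * ((2*n).choose (n+1+k) : ℝ)) := by
    intro k hk
    have hk' : k < n := Finset.mem_range.mp hk
    have hsq : (-1:ℝ)^(k+1) * (-1:ℝ)^(k+1) = 1 := by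
      rw [← pow_add]
      exact Even.neg_one_pow ⟨k+1, by ring⟩
    rw [if_neg (Nat.succ_ne_zero _), inv_fact_eq n (k+1) (by omega),
      show n-(k+1) = n-1-k by omega, neg_one_pow_sub n k hk',
      show n+(k+1) = n+1+k by ring]
    linear_combination (2 * ((-1:ℝ)^n * ((2*n).choose (n+1+k) : ℝ)) / ((2*n).factorial : ℝ)) * hsq
  rw [Finset.sum_range_succ', Finset.sum_congr rfl hterm, ← Finset.mul_sum,
    ← Finset.mul_sum, if_pos rfl, inv_fact_eq n 0 (Nat.zero_le n)]
  have hb := binom_one n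
  simp only [Nat.sub_zero, Nat.add_zero]
  linear_combination ((-1:ℝ)^n / ((2*n).factorial : ℝ)) * hb



noncomputable def aa (r : ℝ) (k m : ℕ) : ℝ :=
  ((-1 : ℝ) ^ m / ((m.factorial : ℝ) * ((2*k + m).factorial : ℝ))) * r ^ (2*k + 2*m)

noncomputable def FF (r : ℝ) (g : ℕ → ℝ) (p : ℕ × ℕ) : ℝ := g p.1 * aa r p.1 p.2

lemma besselJ_even (t : ℝ) (k : ℕ) : besselJ (2*k) t = ∑' m, aa (t/2) k m := rfl

lemma abs_aa (r : ℝ) (k m : ℕ) :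
    |aa r k m| = (r^2)^k * (r^2)^m / ((m.factorial : ℝ) * ((2*k+m).factorial : ℝ)) := by
  rw [aa, abs_mul, abs_div, abs_pow, abs_neg, abs_one, one_pow, abs_pow,
    abs_of_pos (show (0:ℝ) < (m.factorial : ℝ) * ((2*k+m).factorial : ℝ) by positivity),
    show 2*k + 2*m = 2*(k+m) by ring, pow_mul, sq_abs, pow_add]
  ring

lemma abs_FF_le (r : ℝ) (g : ℕ → ℝ) (hg : ∀ k, |g k| ≤ 2) (p : ℕ × ℕ) :
    ‖FF r g p‖ ≤ 2 * (((r^2)^p.1 / p.1.factorial) * ((r^2)^p.2 / p.2.factorial)) := by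
  obtain ⟨k, m⟩ := p
  rw [Real.norm_eq_abs, FF, abs_mul, abs_aa]
  have hfle : (k.factorial : ℝ) * m.factorial ≤ (m.factorial : ℝ) * ((2*k+m).factorial : ℝ) := by
    rw [mul_comm]
    gcongr
    omega
  calc |g k| * ((r^2)^k * (r^2)^m / ((m.factorial : ℝ) * ((2*k+m).factorial : ℝ)))
      ≤ 2 * ((r^2)^k * (r^2)^m / ((k.factorial : ℝ) * m.factorial)) := by
        apply mul_le_mul (hg k) ?_ (by positivity) (by norm_num)
        exact div_le_div_of_nonneg_left (by positivity) (by positivity) hfle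
    _ = 2 * (((r^2)^k / k.factorial) * ((r^2)^m / m.factorial)) := by ring

lemma summable_FF (r : ℝ) (g : ℕ → ℝ) (hg : ∀ k, |g k| ≤ 2) : Summable (FF r g) := by
  refine Summable.of_norm_bounded ?_ (abs_FF_le r g hg)
  exact (((Real.summable_pow_div_factorial (r^2)).mul_of_nonneg
    (Real.summable_pow_div_factorial (r^2)) (fun n => by positivity)
    (fun n => by positivity)).mul_left 2)

lemma summable_aa (r : ℝ) (k : ℕ) : Summable (fun m => aa r k m) := by
  refine Summable.of_norm_bounded (g := fun m => ((r^2)^k) * ((r^2)^m / m.factorial))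
    ((Real.summable_pow_div_factorial (r^2)).mul_left _) (fun m => ?_)
  rw [Real.norm_eq_abs, abs_aa]
  have hfle : (m.factorial : ℝ) ≤ (m.factorial : ℝ) * ((2*k+m).factorial : ℝ) := by
    nth_rewrite 1 [← mul_one (m.factorial : ℝ)]
    gcongr
    exact_mod_cast Nat.one_le_iff_ne_zero.mpr (Nat.factorial_ne_zero _)
  calc (r^2)^k * (r^2)^m / ((m.factorial : ℝ) * ((2*k+m).factorial : ℝ))
      ≤ (r^2)^k * (r^2)^m / (m.factorial : ℝ) :=
        div_le_div_of_nonneg_left (by positivity) (by positivity) hfle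
    _ = (r^2)^k * ((r^2)^m / m.factorial) := by ring

lemma key (t : ℝ) (g : ℕ → ℝ) (hg : ∀ k, |g k| ≤ 2) :
    ∃ S : ℝ, HasSum (fun k => g k * besselJ (2*k) t) S ∧
      HasSum (fun n : ℕ => (∑ k ∈ range (n+1), g k *
        ((-1:ℝ)^(n-k) * (((n-k).factorial : ℝ) * ((n+k).factorial : ℝ))⁻¹)) * (t/2)^(2*n)) S := by
  set r : ℝ := t/2 with hr
  have hFs : Summable (FF r g) := summable_FF r g hg
  have hJ : ∀ k, HasSum (fun m => aa r k m) (besselJ (2*k) t) := by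
    intro k
    rw [besselJ_even]
    exact (summable_aa r k).hasSum
  refine ⟨∑' p, FF r g p, ?_, ?_⟩
  · exact hFs.hasSum.prod_fiberwise (fun k => (hJ k).mul_left (g k))
  · have he : HasSum (FF r g ∘ (Finset.HasAntidiagonal.sigmaAntidiagonalEquivProd (A := ℕ))) (∑' p, FF r g p) :=
      (Equiv.hasSum_iff _).mpr hFs.hasSum
    have h2 : HasSum (fun n : ℕ => ∑ p ∈ Finset.HasAntidiagonal.antidiagonal n, FF r g p) (∑' p, FF r g p) := by
      refine he.sigma (fun n => ?_)
      simpa [Finset.sum_attach] using hasSum_fintype (fun p : (Finset.HasAntidiagonal.antidiagonal n : Finset (ℕ×ℕ)) => FF r g p)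
    have h3 : (fun n : ℕ => ∑ p ∈ Finset.HasAntidiagonal.antidiagonal n, FF r g p)
        = fun n : ℕ => (∑ k ∈ range (n+1), g k *
          ((-1:ℝ)^(n-k) * (((n-k).factorial : ℝ) * ((n+k).factorial : ℝ))⁻¹)) * r^(2*n) := by
      funext n
      rw [Finset.Nat.sum_antidiagonal_eq_sum_range_succ_mk, Finset.sum_mul]
      refine Finset.sum_congr rfl fun k hk => ?_
      have hk' : k ≤ n := by have := Finset.mem_range.mp hk; omega
      rw [FF, aa, show 2*k + (n-k) = n+k by omega, show 2*k + 2*(n-k) = 2*n by omega,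
        div_eq_mul_inv]
      ring
    rw [h3] at h2
    exact h2


lemma hasSum_gone (t : ℝ) :
    HasSum (fun k => (if k = 0 then (1:ℝ) else 2) * besselJ (2*k) t) 1 := by
  obtain ⟨S, h1, h2⟩ := key t (fun k => if k = 0 then (1:ℝ) else 2)
    (fun k => by by_cases hk : k = 0 <;> simp [hk])
  have h2' : HasSum (fun n : ℕ => if n = 0 then (1:ℝ) else 0) S := by
    convert h2 using 2 with n
    rcases Nat.eq_zero_or_pos n with hn | hn
    · subst hn; norm_num
    · rw [if_neg (by omega), coef_one n (by omega), zero_mul]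
  have hS : S = 1 := h2'.unique (hasSum_ite_eq 0 1)
  rwa [hS] at h1

lemma hasSum_gcos (t : ℝ) :
    HasSum (fun k => (if k = 0 then (1:ℝ) else 2*(-1:ℝ)^k) * besselJ (2*k) t) (Real.cos t) := by
  obtain ⟨S, h1, h2⟩ := key t (fun k => if k = 0 then (1:ℝ) else 2*(-1:ℝ)^k)
    (fun k => by by_cases hk : k = 0 <;> simp [hk, abs_mul, abs_pow])
  have h2' : HasSum (fun n : ℕ => (-1:ℝ)^n * t^(2*n) / ((2*n).factorial : ℝ)) S := by
    convert h2 using 2 with n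
    rw [coef_cos n]
    have h4 : (4:ℝ)^n * (t/2)^(2*n) = t^(2*n) := by
      rw [div_pow, show (4:ℝ)^n = 2^(2*n) by rw [pow_mul]; norm_num]
      field_simp
    linear_combination (-((-1:ℝ)^n) / ((2*n).factorial : ℝ)) * h4
  have hS : S = Real.cos t := h2'.unique (Real.hasSum_cos t)
  rwa [hS] at h1

lemma split_sum (t : ℝ) (co ce : ℝ) (g : ℕ → ℝ) (h0 : g 0 = 1)
    (hodd : ∀ l, g (2*l+1) = co) (heven : ∀ l, g (2*l+2) = ce)
    {S : ℝ} (hs : HasSum (fun k => g k * besselJ (2*k) t) S) :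
    S = besselJ 0 t + co * (∑' l, besselJ (4*l+2) t) + ce * (∑' l, besselJ (4*(l+1)) t) := by
  have hsm : Summable (fun k => g k * besselJ (2*k) t) := hs.summable
  have hsm1 : Summable (fun k => g (k+1) * besselJ (2*(k+1)) t) :=
    hsm.comp_injective (fun a b h => by
      have h' : a + 1 = b + 1 := h
      omega)
  have inj1 : Function.Injective (fun l : ℕ => 2*l+1) := fun a b h => by
    have h' : 2*a+1 = 2*b+1 := h
    omega
  have inj2 : Function.Injective (fun l : ℕ => 2*l+2) := fun a b h => by
    have h' : 2*a+2 = 2*b+2 := h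
    omega
  have hsme : Summable (fun l => g (2*l+1) * besselJ (2*(2*l+1)) t) :=
    hsm.comp_injective inj1
  have hsmo : Summable (fun l => g (2*l+2) * besselJ (2*(2*l+2)) t) :=
    hsm.comp_injective inj2
  have hsplit : (∑' l, g (2*l+1) * besselJ (2*(2*l+1)) t)
        + (∑' l, g (2*l+2) * besselJ (2*(2*l+2)) t)
      = ∑' k, g (k+1) * besselJ (2*(k+1)) t :=
    tsum_even_add_odd (f := fun k => g (k+1) * besselJ (2*(k+1)) t) hsme hsmo
  have h1 : S = besselJ 0 t + ∑' k, g (k+1) * besselJ (2*(k+1)) t := by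
    rw [← hs.tsum_eq, Summable.tsum_eq_zero_add hsm]
    congr 1
    show g 0 * besselJ (2*0) t = besselJ 0 t
    rw [h0, one_mul]
  have et1 : ∑' l, g (2*l+1) * besselJ (2*(2*l+1)) t = co * ∑' l, besselJ (4*l+2) t := by
    rw [← tsum_mul_left]
    exact tsum_congr fun l => by rw [hodd l, show 2*(2*l+1) = 4*l+2 by ring]
  have et2 : ∑' l, g (2*l+2) * besselJ (2*(2*l+2)) t = ce * ∑' l, besselJ (4*(l+1)) t := by
    rw [← tsum_mul_left]
    exact tsum_congr fun l => by rw [heven l, show 2*(2*l+2) = 4*(l+1) by ring]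
  rw [h1, ← hsplit, et1, et2]
  ring

lemma coeff_identities (t : ℝ) :
    besselJ 0 t + 2 * (∑' l, besselJ (4*(l+1)) t) = (1 + Real.cos t)/2 ∧
    2 * (∑' l, besselJ (4*l+2) t) = (1 - Real.cos t)/2 := by
  have e1 : (1:ℝ) = besselJ 0 t + 2 * (∑' l, besselJ (4*l+2) t)
      + 2 * (∑' l, besselJ (4*(l+1)) t) :=
    split_sum t 2 2 (fun k => if k = 0 then (1:ℝ) else 2) (by norm_num)
      (fun l => by norm_num) (fun l => by norm_num) (hasSum_gone t)
  have e2 : Real.cos t = besselJ 0 t + (-2) * (∑' l, besselJ (4*l+2) t)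
      + 2 * (∑' l, besselJ (4*(l+1)) t) := by
    refine split_sum t (-2) 2 (fun k => if k = 0 then (1:ℝ) else 2*(-1:ℝ)^k) (by norm_num)
      (fun l => ?_) (fun l => ?_) (hasSum_gcos t)
    · show (if 2*l+1 = 0 then (1:ℝ) else 2*(-1:ℝ)^(2*l+1)) = -2
      rw [if_neg (by omega), Odd.neg_one_pow ⟨l, by ring⟩]
      ring
    · show (if 2*l+2 = 0 then (1:ℝ) else 2*(-1:ℝ)^(2*l+2)) = 2
      rw [if_neg (by omega), Even.neg_one_pow ⟨l+1, by ring⟩]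
      ring
  constructor <;> linarith

end Stmt15Aux

/-- for every u_0 ∈ ℝ^N and real t,
J_0(t) A u_0 + 2(Σ_{l=1}^∞ J_{4l}(t)) A u_0 + 2(Σ_{l=1}^∞ J_{4l−2}(t)) B u_0
= (1/2)((e·u_0) e + (w·u_0) cos t · w). -/
theorem stmt15 (N : ℕ) (hN : 0 < N) (u0 : Fin N → ℝ) (t : ℝ) :
    besselJ 0 t • (Amat N).mulVec u0
      + (2 * ∑' l : ℕ, besselJ (4 * (l + 1)) t) • (Amat N).mulVec u0
      + (2 * ∑' l : ℕ, besselJ (4 * l + 2) t) • (Bmat N).mulVec u0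
    = (1 / 2 : ℝ) • ((evec N ⬝ᵥ u0) • evec N + ((wvec N ⬝ᵥ u0) * Real.cos t) • wvec N) := by
  obtain ⟨hA, hB⟩ := Stmt15Aux.coeff_identities t
  set c := Real.cos t with hc
  funext i
  simp only [Pi.add_apply, Pi.smul_apply, smul_eq_mul, Matrix.mulVec, dotProduct,
    evec, wvec, mul_one, one_mul]
  have hsplit : ∀ j : Fin N, (1+c)/2 * (Amat N i j * u0 j) + (1-c)/2 * (Bmat N i j * u0 j)
      = 1/2 * u0 j + c/2 * ((-1:ℝ)^(i.1) * ((-1:ℝ)^(j.1) * u0 j)) := by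
    intro j
    rcases Nat.even_or_odd (i.1 + j.1) with hp | hp
    · have hA1 : Amat N i j = 1 := by
        rw [Amat]
        exact if_pos (by obtain ⟨k, hk⟩ := hp; exact ⟨k+1, by omega⟩)
      have hB0 : Bmat N i j = 0 := by
        rw [Bmat]
        refine if_neg ?_
        rw [Nat.odd_iff]
        obtain ⟨k, hk⟩ := hp
        omega
      have hprod : (-1:ℝ)^(i.1) * (-1:ℝ)^(j.1) = 1 := by
        rw [← pow_add]; exact Even.neg_one_pow hp
      rw [hA1, hB0]
      linear_combination (-(c * u0 j)/2) * hprod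
    · have hA0 : Amat N i j = 0 := by
        rw [Amat]
        refine if_neg ?_
        rw [Nat.even_iff]
        obtain ⟨k, hk⟩ := hp
        omega
      have hB1 : Bmat N i j = 1 := by
        rw [Bmat]
        exact if_pos (by obtain ⟨k, hk⟩ := hp; exact ⟨k+1, by omega⟩)
      have hprod : (-1:ℝ)^(i.1) * (-1:ℝ)^(j.1) = -1 := by
        rw [← pow_add]; exact Odd.neg_one_pow hp
      rw [hA0, hB1]
      linear_combination (-(c * u0 j)/2) * hprod
  have step : (1+c)/2 * (∑ x : Fin N, Amat N i x * u0 x)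
      + (1-c)/2 * (∑ x : Fin N, Bmat N i x * u0 x)
      = ∑ x : Fin N, (1/2 * u0 x + c/2 * ((-1:ℝ)^(i.1) * ((-1:ℝ)^(x.1) * u0 x))) := by
    rw [Finset.mul_sum, Finset.mul_sum, ← Finset.sum_add_distrib]
    exact Finset.sum_congr rfl fun x _ => hsplit x
  have expand : ∑ x : Fin N, (1/2 * u0 x + c/2 * ((-1:ℝ)^(i.1) * ((-1:ℝ)^(x.1) * u0 x)))
      = 1/2 * (∑ x : Fin N, u0 x)
        + c/2 * ((-1:ℝ)^(i.1) * ∑ x : Fin N, (-1:ℝ)^(x.1) * u0 x) := by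
    rw [Finset.sum_add_distrib, ← Finset.mul_sum, ← Finset.mul_sum, ← Finset.mul_sum]
  have lhs_eq : besselJ 0 t * (∑ x : Fin N, Amat N i x * u0 x) +
        (2 * ∑' (l : ℕ), besselJ (4 * (l + 1)) t) * (∑ x : Fin N, Amat N i x * u0 x) +
      (2 * ∑' (l : ℕ), besselJ (4 * l + 2) t) * (∑ x : Fin N, Bmat N i x * u0 x)
      = (1+c)/2 * (∑ x : Fin N, Amat N i x * u0 x)
        + (1-c)/2 * (∑ x : Fin N, Bmat N i x * u0 x) := by
    rw [← hA, ← hB]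
    ring
  rw [lhs_eq, step, expand]
  ring
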